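/- Suppose (I, ≤) is a preorder, θ is antitone (j ≤ i implies θ(i) ≤ θ(j), so for j ≤ i there is a canonical monoid homomorphism q(i,j) : M/θ(i) → M/θ(j) with q(i,j)(⟦a⟧_i) = ⟦a⟧_j), I carries the Alexandroff lower-set topology, and F carries the topology generated by the sets [a](U) for a ∈ M and U open. Then a section s : I → F of f (with s(i) ∈ {i} × M/θ(i) for all i) is continuous if and only if for all i, j ∈ I with j ≤ i, q(i,j) applied to the second component of s(i) equals the second component of s(j). -/

import Mathlib

open Topology
/-- The Alexandroff lower-set topology on a preorder: open sets are the lower sets. -/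
def lowerTop (I : Type*) [Preorder I] : TopologicalSpace I where
  IsOpen U := IsLowerSet U
  isOpen_univ := isLowerSet_univ
  isOpen_inter := fun _ _ h₁ h₂ => h₁.inter h₂
  isOpen_sUnion := fun _ hS => isLowerSet_sUnion hS

/-- The topology on `F = Σ i, M/θ i` generated by the subbasis of sets
`[m](U) = {(i, ⟦m⟧ᵢ) : i ∈ U}` for `m ∈ M` and `U` open in `τ`. -/
def etaleTop {M I : Type*} [Monoid M] (θ : I → Con M) (τ : TopologicalSpace I) :
    TopologicalSpace ((i : I) × (θ i).Quotient) :=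
  TopologicalSpace.generateFrom
    {V | ∃ (m : M) (U : Set I), τ.IsOpen U ∧
      V = (fun i => (⟨i, (↑m : (θ i).Quotient)⟩ : (i : I) × (θ i).Quotient)) '' U}

/-- Let `M` be a monoid, `(I, ≤)` a preorder, `θ` an antitone family of
congruences on `M` with canonical homomorphisms `q i j : M/θ i → M/θ j` for `j ≤ i`
(characterized by `q i j ⟦a⟧ᵢ = ⟦a⟧ⱼ`). With the Alexandroff lower-set topology on `I`
and the generated topology on `F = Σ i, M/θ i`, a section `s` of `Sigma.fst` (encoded
as `s : ∀ i, (θ i).Quotient`, i.e. `i ↦ (i, s i)`) is continuous iff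
`q i j (s i) = s j` for all `j ≤ i`. -/
theorem stmt4 {M I : Type*} [Monoid M] [Preorder I] (θ : I → Con M)
    (hθ : ∀ i j : I, j ≤ i → θ i ≤ θ j)
    (q : ∀ i j, j ≤ i → (θ i).Quotient →* (θ j).Quotient)
    (hq : ∀ i j (h : j ≤ i) (a : M), q i j h (↑a) = (↑a : (θ j).Quotient))
    (s : ∀ i : I, (θ i).Quotient) :
    Continuous[lowerTop I, etaleTop θ (lowerTop I)]
        (fun i => (⟨i, s i⟩ : (i : I) × (θ i).Quotient)) ↔
      ∀ i j (h : j ≤ i), q i j h (s i) = s j := by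

  letI : TopologicalSpace I := lowerTop I
  rw [etaleTop, continuous_generateFrom_iff]
  constructor
  · intro hc i j hji
    obtain ⟨m, hm⟩ := Quotient.exists_rep (s i)
    have hm' : (↑m : (θ i).Quotient) = s i := hm
    have hopen := hc _ ⟨m, {k | k ≤ i}, fun a b hba ha => le_trans hba ha, rfl⟩
    have hlow : IsLowerSet ((fun i => (⟨i, s i⟩ : (i : I) × (θ i).Quotient)) ⁻¹'
        ((fun k => (⟨k, (↑m : (θ k).Quotient)⟩ : (k : I) × (θ k).Quotient)) '' {k | k ≤ i})) :=
      hopen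
    have hi : i ∈ (fun i => (⟨i, s i⟩ : (i : I) × (θ i).Quotient)) ⁻¹'
        ((fun k => (⟨k, (↑m : (θ k).Quotient)⟩ : (k : I) × (θ k).Quotient)) '' {k | k ≤ i}) := by
      refine ⟨i, le_refl i, ?_⟩
      simp [hm']
    have hj := hlow hji hi
    obtain ⟨k, -, hk⟩ := hj
    obtain ⟨rfl, hk2⟩ := Sigma.mk.inj_iff.mp hk
    rw [← hm', hq, eq_of_heq hk2]
  · rintro hcomp V ⟨m, U, hU, rfl⟩
    have hUlow : IsLowerSet U := hU
    show IsLowerSet _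
    intro i j hji hi
    obtain ⟨k, hkU, hk⟩ := hi
    obtain ⟨rfl, hk2⟩ := Sigma.mk.inj_iff.mp hk
    refine ⟨j, hUlow hji hkU, ?_⟩
    have h2 : s j = (↑m : (θ j).Quotient) := by
      rw [← hcomp k j hji, ← eq_of_heq hk2, hq]
    simp [h2]
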